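/- Let g : ℝ → ℝ be continuous, nonnegative, even, and π-periodic, and let n, m be positive integers. Define G̃(m,n) = (1/π) ∫_{-π/2}^{π/2} ∏_{i=0}^{n−1} g(x + m·i·π/n) dx. Then G̃(m,n) ≥ G̃(1,n). -/
import Mathlib

open Real MeasureTheory

private lemma prod_range_mul' {M : Type*} [CommMonoid M] (f : ℕ → M) (p q : ℕ) :
    ∏ i ∈ Finset.range (p * q), f i
      = ∏ a ∈ Finset.range p, ∏ b ∈ Finset.range q, f (a * q + b) := by
  induction p with
  | zero => simp
  | succ p ih =>
    rw [Nat.succ_mul, Finset.prod_range_add, ih, Finset.prod_range_succ]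

private lemma prod_coprime (F : ℕ → ℝ) {m' n' : ℕ} (hn' : 0 < n') (hco : Nat.Coprime m' n') :
    ∏ a ∈ Finset.range n', F ((m' * a) % n') = ∏ j ∈ Finset.range n', F j := by
  have hinj : Set.InjOn (fun a => (m' * a) % n') (Finset.range n') := by
    intro a ha b hb hab
    simp only [Finset.coe_range, Set.mem_Iio] at ha hb
    have : a ≡ b [MOD n'] :=
      Nat.ModEq.cancel_left_of_coprime (by simpa [Nat.coprime_comm] using hco) hab
    simpa [Nat.ModEq, Nat.mod_eq_of_lt ha, Nat.mod_eq_of_lt hb] using this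
  have hmaps : ∀ a ∈ Finset.range n', (m' * a) % n' ∈ Finset.range n' := by
    intro a _; exact Finset.mem_range.2 (Nat.mod_lt _ hn')
  have himg : (Finset.range n').image (fun a => (m' * a) % n') = Finset.range n' := by
    apply Finset.eq_of_subset_of_card_le
    · exact Finset.image_subset_iff.2 hmaps
    · rw [Finset.card_image_of_injOn hinj]
  refine Finset.prod_nbij (fun a => (m' * a) % n') hmaps hinj ?_ (fun a _ => rfl)
  intro y hy
  rw [← himg] at hy
  rcases Finset.mem_image.1 (by exact_mod_cast hy) with ⟨a, ha, hae⟩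
  exact ⟨a, by exact_mod_cast ha, hae⟩

private lemma prod_mod (f : ℕ → ℝ) {m n : ℕ} (hm : 0 < m) (hn : 0 < n) :
    ∏ i ∈ Finset.range n, f ((m * i) % n)
      = (∏ j ∈ Finset.range (n / Nat.gcd m n), f (Nat.gcd m n * j)) ^ (Nat.gcd m n) := by
  set d := Nat.gcd m n with hdef
  have hd : 0 < d := Nat.gcd_pos_of_pos_right m hn
  set n' := n / d with hn'def
  set m' := m / d with hm'def
  have hdvdn : d ∣ n := Nat.gcd_dvd_right m n
  have hdvdm : d ∣ m := Nat.gcd_dvd_left m n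
  have hnd : d * n' = n := Nat.mul_div_cancel' hdvdn
  have hmd : d * m' = m := Nat.mul_div_cancel' hdvdm
  have hn' : 0 < n' := Nat.div_pos (Nat.le_of_dvd hn hdvdn) hd
  have hco : Nat.Coprime m' n' := Nat.coprime_div_gcd_div_gcd hd
  have h1 : ∏ i ∈ Finset.range n, f ((m * i) % n)
      = ∏ a ∈ Finset.range d, ∏ b ∈ Finset.range n', f ((m * (a * n' + b)) % n) := by
    rw [← hnd]; exact prod_range_mul' _ d n'
  have h2 : ∀ a b : ℕ, (m * (a * n' + b)) % n = (m * b) % n := by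
    intro a b
    have : m * (a * n' + b) = m * b + (a * m') * n := by
      rw [← hnd, ← hmd]; ring
    rw [this, Nat.add_mul_mod_self_right]
  have h3 : ∀ b : ℕ, (m * b) % n = d * ((m' * b) % n') := by
    intro b
    rw [← hnd, ← hmd, mul_assoc, Nat.mul_mod_mul_left]
  calc ∏ i ∈ Finset.range n, f ((m * i) % n)
      = ∏ a ∈ Finset.range d, ∏ b ∈ Finset.range n', f (d * ((m' * b) % n')) := by
        rw [h1]; exact Finset.prod_congr rfl fun a _ => Finset.prod_congr rfl fun b _ => by
          rw [h2, h3]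
    _ = (∏ b ∈ Finset.range n', f (d * ((m' * b) % n'))) ^ d := by
        rw [Finset.prod_const, Finset.card_range]  -- wrong lemma; fix below
    _ = (∏ j ∈ Finset.range n', f (d * j)) ^ d := by
        rw [prod_coprime (fun j => f (d * j)) hn' hco]

private lemma amgm (d : ℕ) (hd : 0 < d) (z : ℕ → ℝ) (hz : ∀ i, 0 ≤ z i) :
    ∏ r ∈ Finset.range d, z r ≤ (1 / d) * ∑ r ∈ Finset.range d, z r ^ d := by
  have hd0 : (d : ℝ) ≠ 0 := Nat.cast_ne_zero.2 hd.ne'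
  have key := Real.geom_mean_le_arith_mean_weighted (Finset.range d)
      (fun _ => (d : ℝ)⁻¹) (fun r => z r ^ d)
      (fun i _ => by positivity)
      (by simp [Finset.sum_const, Finset.card_range, hd0])
      (fun i _ => pow_nonneg (hz i) d)

  have hL : ∀ r : ℕ, ((z r ^ d : ℝ)) ^ ((d : ℝ)⁻¹) = z r := by
    intro r
    rw [← Real.rpow_natCast (z r) d, ← Real.rpow_mul (hz r), mul_inv_cancel₀ hd0,
      Real.rpow_one]
  calc ∏ r ∈ Finset.range d, z r
      = ∏ r ∈ Finset.range d, ((z r ^ d : ℝ)) ^ ((d : ℝ)⁻¹) := by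
        exact Finset.prod_congr rfl fun r _ => (hL r).symm
    _ ≤ ∑ r ∈ Finset.range d, (d : ℝ)⁻¹ * z r ^ d := key
    _ = (1 / d) * ∑ r ∈ Finset.range d, z r ^ d := by
        rw [← Finset.mul_sum, one_div]

theorem stmt_14 (g : ℝ → ℝ) (hc : Continuous g) (hnonneg : ∀ x, 0 ≤ g x)
    (heven : ∀ x, g (-x) = g x) (hper : ∀ x, g (x + π) = g x)
    (m n : ℕ) (hm : 0 < m) (hn : 0 < n) :
    (1 / π) * ∫ x in (-(π/2))..(π/2), ∏ i ∈ Finset.range n, g (x + 1 * i * π / n)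
      ≤ (1 / π) * ∫ x in (-(π/2))..(π/2), ∏ i ∈ Finset.range n, g (x + m * i * π / n) := by
  have hπ : (0:ℝ) < π := Real.pi_pos
  set d := Nat.gcd m n with hdef
  have hd : 0 < d := Nat.gcd_pos_of_pos_right m hn
  set n' := n / d with hn'def
  have hdvdn : d ∣ n := Nat.gcd_dvd_right m n
  have hnd : d * n' = n := Nat.mul_div_cancel' hdvdn
  have hn' : 0 < n' := Nat.div_pos (Nat.le_of_dvd hn hdvdn) hd
  have hn0 : (n:ℝ) ≠ 0 := Nat.cast_ne_zero.2 hn.ne'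
  have hn'0 : (n':ℝ) ≠ 0 := Nat.cast_ne_zero.2 hn'.ne'
  have hd0 : (d:ℝ) ≠ 0 := Nat.cast_ne_zero.2 hd.ne'
  have hncast : (n:ℝ) = (d:ℝ) * (n':ℝ) := by exact_mod_cast hnd.symm
  -- the function h
  set h : ℝ → ℝ := fun x => ∏ j ∈ Finset.range n', g (x + j * π / n') with hh
  have hcont : Continuous h := by
    apply continuous_finset_prod
    intro j _
    exact hc.comp (continuous_id.add continuous_const)
  have hpos : ∀ x, 0 ≤ h x := fun x => Finset.prod_nonneg fun j _ => hnonneg _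
  have hhper : Function.Periodic (fun x => h x ^ d) π := by
    intro x
    simp only [hh]
    congr 1
    refine Finset.prod_congr rfl fun j _ => ?_
    have e : x + π + ↑j * π / ↑n' = (x + ↑j * π / ↑n') + π := by ring
    rw [e, hper]
  have natper : ∀ x : ℝ, ∀ k : ℕ, g (x + k * π) = g x := by
    intro x k
    induction k with
    | zero => simp
    | succ k ih =>
      have e : x + ((k:ℝ) + 1) * π = (x + k * π) + π := by ring
      rw [Nat.cast_succ, e, hper, ih]
  -- RHS integrand = h x ^ d
  have hR : ∀ x, ∏ i ∈ Finset.range n, g (x + m * i * π / n) = h x ^ d := by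
    intro x
    have e1 : ∀ i : ℕ, g (x + m * i * π / n) = g (x + ((m * i) % n : ℕ) * π / n) := by
      intro i
      have hsplit : (m:ℝ) * i * π / n = ((m * i) % n : ℕ) * π / n + ((m * i) / n : ℕ) * π := by
        have hc2 : ((m * i : ℕ):ℝ) = (n:ℝ) * ((m * i) / n : ℕ) + ((m * i) % n : ℕ) := by
          exact_mod_cast (Nat.div_add_mod (m * i) n).symm
        field_simp
        push_cast at hc2 ⊢
        nlinarith [hc2]
      rw [hsplit, show x + (((m * i) % n : ℕ) * π / n + ((m * i) / n : ℕ) * π)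
          = (x + ((m * i) % n : ℕ) * π / n) + ((m * i) / n : ℕ) * π by ring, natper]
    calc ∏ i ∈ Finset.range n, g (x + m * i * π / n)
        = ∏ i ∈ Finset.range n, (fun k : ℕ => g (x + k * π / n)) ((m * i) % n) :=
          Finset.prod_congr rfl fun i _ => e1 i
      _ = (∏ j ∈ Finset.range n', (fun k : ℕ => g (x + k * π / n)) (d * j)) ^ d := by
          rw [hn'def, hdef]; exact prod_mod (fun k : ℕ => g (x + k * π / n)) hm hn
      _ = h x ^ d := by
          simp only [hh]
          congr 1
          refine Finset.prod_congr rfl fun j _ => ?_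
          show g (x + ((d * j : ℕ):ℝ) * π / n) = g (x + j * π / n')
          have e : ((d * j : ℕ):ℝ) * π / n = (j:ℝ) * π / n' := by
            push_cast
            rw [hncast]
            field_simp
          rw [e]
  -- LHS integrand = ∏_{r<d} h (x + r π / n)
  have hL : ∀ x, ∏ i ∈ Finset.range n, g (x + 1 * i * π / n)
      = ∏ r ∈ Finset.range d, h (x + r * π / n) := by
    intro x
    have e := prod_range_mul' (fun i : ℕ => g (x + 1 * i * π / n)) n' d
    rw [mul_comm n' d, hnd] at e
    rw [e, Finset.prod_comm]
    refine Finset.prod_congr rfl fun b _ => ?_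
    simp only [hh]
    refine Finset.prod_congr rfl fun a _ => ?_
    show g (x + 1 * ((a * d + b : ℕ):ℝ) * π / n) = g (x + b * π / n + a * π / n')
    have e : x + 1 * ((a * d + b : ℕ):ℝ) * π / n = x + b * π / n + a * π / n' := by
      push_cast
      rw [hncast]
      field_simp
      ring
    rw [e]
  rw [intervalIntegral.integral_congr (g := fun x => h x ^ d) (fun x _ => hR x),
    intervalIntegral.integral_congr
      (g := fun x => ∏ r ∈ Finset.range d, h (x + r * π / n)) (fun x _ => hL x)]
  apply mul_le_mul_of_nonneg_left ?_ (by positivity)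
  -- reduce to the integral inequality
  have hint_prod : IntervalIntegrable (fun x => ∏ r ∈ Finset.range d, h (x + r * π / n))
      volume (-(π/2)) (π/2) := by
    apply Continuous.intervalIntegrable
    apply continuous_finset_prod
    intro r _
    exact hcont.comp (continuous_id.add continuous_const)
  have hint_sum : IntervalIntegrable
      (fun x => (1 / (d:ℝ)) * ∑ r ∈ Finset.range d, h (x + r * π / n) ^ d)
      volume (-(π/2)) (π/2) := by
    apply Continuous.intervalIntegrable
    apply Continuous.mul continuous_const
    apply continuous_finset_sum
    intro r _
    exact (hcont.comp (continuous_id.add continuous_const)).pow d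
  have hshift : ∀ c : ℝ, (∫ x in (-(π/2))..(π/2), h (x + c) ^ d)
      = ∫ x in (-(π/2))..(π/2), h x ^ d := by
    intro c
    rw [show (fun x => h (x + c) ^ d) = fun x => (fun y => h y ^ d) (x + c) from rfl]
    rw [intervalIntegral.integral_comp_add_right (fun y => h y ^ d) c]
    have key := hhper.intervalIntegral_add_eq (-(π/2) + c) (-(π/2))
    rw [show -(π/2) + c + π = π/2 + c by ring, show (-(π/2) : ℝ) + π = π/2 by ring] at key
    exact key
  calc (∫ x in (-(π/2))..(π/2), ∏ r ∈ Finset.range d, h (x + r * π / n))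
      ≤ ∫ x in (-(π/2))..(π/2), (1 / (d:ℝ)) * ∑ r ∈ Finset.range d, h (x + r * π / n) ^ d := by
        apply intervalIntegral.integral_mono_on (by linarith) hint_prod hint_sum
        intro x _
        exact amgm d hd (fun r => h (x + r * π / n)) (fun r => hpos _)
    _ = (1 / (d:ℝ)) * ∑ r ∈ Finset.range d, ∫ x in (-(π/2))..(π/2), h (x + r * π / n) ^ d := by
        rw [intervalIntegral.integral_const_mul, intervalIntegral.integral_finset_sum]
        intro r _
        exact ((hcont.comp (continuous_id.add continuous_const)).pow d).intervalIntegrable _ _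
    _ = (1 / (d:ℝ)) * ∑ r ∈ Finset.range d, ∫ x in (-(π/2))..(π/2), h x ^ d := by
        congr 1
        exact Finset.sum_congr rfl fun r _ => hshift _
    _ = ∫ x in (-(π/2))..(π/2), h x ^ d := by
        rw [Finset.sum_const, Finset.card_range, nsmul_eq_mul]
        field_simp
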